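/- Let f_W be an n-layer ReLU network with weight matrices W_1, …, W_n, each nonzero, and let U_1, …, U_n be matrices of the same respective dimensions satisfying ‖U_l‖₂ ≤ (1/n)·‖W_l‖₂ for every l. Let B > 0, ε > 0, and let x be an input with ‖x‖₂ ≤ B. Then for all output indices i, j, | RM_ε(f_{W+U}, x, i, j) − RM_ε(f_W, x, i, j) | ≤ 2e · (B + ε) · (∏_{l=1}^{n} ‖W_l‖₂) · Σ_{l=1}^{n} ‖U_l‖₂ / ‖W_l‖₂. -/

import Mathlib

open Matrix

/-- The spectral norm of a real matrix: its operator norm as a map between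
Euclidean (`ℓ²`) spaces. -/
noncomputable def specNorm {m k : ℕ} (A : Matrix (Fin m) (Fin k) ℝ) : ℝ :=
  ‖LinearMap.toContinuousLinearMap (Matrix.toEuclideanLin A)‖

/-- The Euclidean (`ℓ²`) norm of a vector in `ℝ^k`. -/
noncomputable def vnorm {k : ℕ} (v : Fin k → ℝ) : ℝ :=
  Real.sqrt (∑ i, (v i) ^ 2)

/-- Coordinatewise ReLU activation. -/
def relu {k : ℕ} (v : Fin k → ℝ) : Fin k → ℝ := fun i => max (v i) 0

/-- `actStack n d W x = act(W_n · act(W_{n-1} · ⋯ · act(W_1 · x)))`: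
the activated output after `n` layers (activation applied after every layer). -/
def actStack : (n : ℕ) → (d : Fin (n + 1) → ℕ) →
    ((l : Fin n) → Matrix (Fin (d l.succ)) (Fin (d l.castSucc)) ℝ) →
    (Fin (d 0) → ℝ) → (Fin (d (Fin.last n)) → ℝ)
  | 0, _, _, x => x
  | n + 1, d, W, x =>
      relu ((W (Fin.last n)) *ᵥ
        actStack n (fun l => d l.castSucc) (fun l => W l.castSucc) x)

/-- The `n`-layer ReLU network with weight matrices `W_1, …, W_n`:
`f_W(x) = W_n · act(W_{n-1} · ⋯ · act(W_1 · x) ⋯)` (no activation on the last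
layer). For `n = 0` it is the identity. -/
def reluNet : (n : ℕ) → (d : Fin (n + 1) → ℕ) →
    ((l : Fin n) → Matrix (Fin (d l.succ)) (Fin (d l.castSucc)) ℝ) →
    (Fin (d 0) → ℝ) → (Fin (d (Fin.last n)) → ℝ)
  | 0, _, _, x => x
  | n + 1, d, W, x =>
      (W (Fin.last n)) *ᵥ
        actStack n (fun l => d l.castSucc) (fun l => W l.castSucc) x


set_option maxHeartbeats 2000000


noncomputable def ev {k : ℕ} (v : Fin k → ℝ) : EuclideanSpace ℝ (Fin k) :=
  (WithLp.equiv 2 _).symm v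

lemma vnorm_eq {k : ℕ} (v : Fin k → ℝ) : vnorm v = ‖ev v‖ := by
  rw [EuclideanSpace.norm_eq]
  simp [vnorm, ev, Real.norm_eq_abs, sq_abs]

lemma vnorm_nonneg {k : ℕ} (v : Fin k → ℝ) : 0 ≤ vnorm v := Real.sqrt_nonneg _

lemma ev_add {k : ℕ} (u v : Fin k → ℝ) : ev (u + v) = ev u + ev v := rfl
lemma ev_sub {k : ℕ} (u v : Fin k → ℝ) : ev (u - v) = ev u - ev v := rfl

lemma vnorm_add_le {k : ℕ} (u v : Fin k → ℝ) : vnorm (u + v) ≤ vnorm u + vnorm v := by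
  rw [vnorm_eq, vnorm_eq, vnorm_eq, ev_add]; exact norm_add_le _ _

lemma vnorm_sub_zero {k : ℕ} (v : Fin k → ℝ) : vnorm (v - v) = 0 := by
  rw [vnorm_eq, ev_sub]; simp

lemma vnorm_mulVec_le {m k : ℕ} (A : Matrix (Fin m) (Fin k) ℝ) (v : Fin k → ℝ) :
    vnorm (A *ᵥ v) ≤ specNorm A * vnorm v := by
  rw [vnorm_eq, vnorm_eq]
  have h : (LinearMap.toContinuousLinearMap (Matrix.toEuclideanLin A)) (ev v) = ev (A *ᵥ v) := by
    simp [ev, Matrix.toEuclideanLin_toLp, Matrix.toLin'_apply]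
  have := (LinearMap.toContinuousLinearMap (Matrix.toEuclideanLin A)).le_opNorm (ev v)
  rw [h] at this
  exact this

lemma specNorm_nonneg {m k : ℕ} (A : Matrix (Fin m) (Fin k) ℝ) : 0 ≤ specNorm A :=
  norm_nonneg _

lemma specNorm_pos {m k : ℕ} {A : Matrix (Fin m) (Fin k) ℝ} (hA : A ≠ 0) : 0 < specNorm A := by
  rw [specNorm, norm_pos_iff]
  intro h
  apply hA
  have h1 : Matrix.toEuclideanLin A = 0 :=
    (LinearEquiv.map_eq_zero_iff _).mp h
  exact (LinearEquiv.map_eq_zero_iff _).mp h1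

lemma specNorm_add_le {m k : ℕ} (A B : Matrix (Fin m) (Fin k) ℝ) :
    specNorm (A + B) ≤ specNorm A + specNorm B := by
  simp only [specNorm, map_add]
  exact norm_add_le _ _

lemma vnorm_le_of_abs_le {k : ℕ} {u w : Fin k → ℝ} (h : ∀ i, |u i| ≤ |w i|) :
    vnorm u ≤ vnorm w := by
  apply Real.sqrt_le_sqrt
  apply Finset.sum_le_sum
  intro i _
  rw [← sq_abs (u i), ← sq_abs (w i)]
  exact pow_le_pow_left₀ (abs_nonneg _) (h i) 2

lemma vnorm_relu_sub_relu {k : ℕ} (u v : Fin k → ℝ) :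
    vnorm (relu u - relu v) ≤ vnorm (u - v) := by
  apply vnorm_le_of_abs_le
  intro i
  simpa [relu] using abs_max_sub_max_le_abs (u i) (v i) 0

lemma vnorm_relu_le {k : ℕ} (v : Fin k → ℝ) : vnorm (relu v) ≤ vnorm v := by
  apply vnorm_le_of_abs_le
  intro i
  simp only [relu]
  rcases le_or_gt (v i) 0 with h | h
  · simp [max_eq_right h]
  · simp [max_eq_left h.le]

lemma abs_apply_le_vnorm {k : ℕ} (v : Fin k → ℝ) (i : Fin k) : |v i| ≤ vnorm v := by
  rw [← Real.sqrt_sq_eq_abs]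
  apply Real.sqrt_le_sqrt
  exact Finset.single_le_sum (fun j _ => sq_nonneg (v j)) (Finset.mem_univ i)

lemma actStack_vnorm_le : ∀ (n : ℕ) (d : Fin (n + 1) → ℕ)
    (W : (l : Fin n) → Matrix (Fin (d l.succ)) (Fin (d l.castSucc)) ℝ)
    (x : Fin (d 0) → ℝ),
    vnorm (actStack n d W x) ≤ (∏ l, specNorm (W l)) * vnorm x
  | 0, d, W, x => by simp [actStack]
  | n + 1, d, W, x => by
    rw [actStack]
    have h1 := vnorm_relu_le ((W (Fin.last n)) *ᵥ
      actStack n (fun l => d l.castSucc) (fun l => W l.castSucc) x)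
    have h2 := vnorm_mulVec_le (W (Fin.last n))
      (actStack n (fun l => d l.castSucc) (fun l => W l.castSucc) x)
    have h3 := actStack_vnorm_le n (fun l => d l.castSucc) (fun l => W l.castSucc) x
    have h4 : specNorm (W (Fin.last n)) *
        vnorm (actStack n (fun l => d l.castSucc) (fun l => W l.castSucc) x) ≤
        specNorm (W (Fin.last n)) * ((∏ l : Fin n, specNorm (W l.castSucc)) * vnorm x) :=
      mul_le_mul_of_nonneg_left h3 (specNorm_nonneg _)
    rw [Fin.prod_univ_castSucc]
    calc _ ≤ _ := h1
      _ ≤ _ := h2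
      _ ≤ _ := h4
      _ = _ := by ring

lemma prod_specNorm_add_le {n : ℕ} (d : Fin (n + 1) → ℕ)
    (W U : (l : Fin n) → Matrix (Fin (d l.succ)) (Fin (d l.castSucc)) ℝ) :
    (∏ l, specNorm (W l + U l)) ≤ ∏ l, (specNorm (W l) + specNorm (U l)) := by
  apply Finset.prod_le_prod (fun l _ => specNorm_nonneg _)
  exact fun l _ => specNorm_add_le _ _


lemma step_arith (w u P S X : ℝ) (hw : 0 < w) (hu : 0 ≤ u) (hP : 0 ≤ P) (hS : 0 ≤ S)
    (hX : 0 ≤ X) :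
    w * (P * S * X) + u * (P * X) ≤ P * (w + u) * (S + u / w) * X := by
  have hq : 0 ≤ u / w := div_nonneg hu hw.le
  have hw' : w ≠ 0 := hw.ne'
  have h1 : P * (w + u) * (S + u / w) * X =
      w * (P * S * X) + u * (P * X) + P * (u * S) * X + P * (u * (u / w)) * X := by
    field_simp
    ring
  have h2 : 0 ≤ P * (u * S) * X := mul_nonneg (mul_nonneg hP (mul_nonneg hu hS)) hX
  have h3 : 0 ≤ P * (u * (u / w)) * X := mul_nonneg (mul_nonneg hP (mul_nonneg hu hq)) hX
  linarith

lemma actStack_perturb : ∀ (n : ℕ) (d : Fin (n + 1) → ℕ)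
    (W U : (l : Fin n) → Matrix (Fin (d l.succ)) (Fin (d l.castSucc)) ℝ)
    (_ : ∀ l, W l ≠ 0) (x : Fin (d 0) → ℝ),
    vnorm (actStack n d (fun l => W l + U l) x - actStack n d W x)
      ≤ (∏ l, (specNorm (W l) + specNorm (U l))) *
          (∑ l, specNorm (U l) / specNorm (W l)) * vnorm x
  | 0, d, W, U, hW, x => by
    simp only [actStack]
    rw [vnorm_sub_zero]
    simp
  | n + 1, d, W, U, hW, x => by
    have hIH := actStack_perturb n (fun l => d l.castSucc) (fun l => W l.castSucc)
      (fun l => U l.castSucc) (fun l => hW l.castSucc) x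
    have hA := actStack_vnorm_le n (fun l => d l.castSucc)
      (fun l => W l.castSucc + U l.castSucc) x
    have hprodA : (∏ l : Fin n, specNorm (W l.castSucc + U l.castSucc)) ≤
        ∏ l : Fin n, (specNorm (W l.castSucc) + specNorm (U l.castSucc)) :=
      Finset.prod_le_prod (fun l _ => specNorm_nonneg _) (fun l _ => specNorm_add_le _ _)
    have hwpos : 0 < specNorm (W (Fin.last n)) := specNorm_pos (hW _)
    have hu0 : 0 ≤ specNorm (U (Fin.last n)) := specNorm_nonneg _
    have hP0 : 0 ≤ ∏ l : Fin n, (specNorm (W l.castSucc) + specNorm (U l.castSucc)) :=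
      Finset.prod_nonneg fun l _ => add_nonneg (specNorm_nonneg _) (specNorm_nonneg _)
    have hS0 : 0 ≤ ∑ l : Fin n, specNorm (U l.castSucc) / specNorm (W l.castSucc) :=
      Finset.sum_nonneg fun l _ => div_nonneg (specNorm_nonneg _) (specNorm_pos (hW _)).le
    have hX0 : 0 ≤ vnorm x := vnorm_nonneg x
    have hga : vnorm (actStack n (fun l => d l.castSucc)
          (fun l => W l.castSucc + U l.castSucc) x) ≤
        (∏ l : Fin n, (specNorm (W l.castSucc) + specNorm (U l.castSucc))) * vnorm x :=
      hA.trans (mul_le_mul_of_nonneg_right hprodA hX0)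
    simp only [actStack]
    rw [Fin.prod_univ_castSucc, Fin.sum_univ_castSucc]
    have key : (W (Fin.last n) + U (Fin.last n)) *ᵥ
          actStack n (fun l => d l.castSucc) (fun l => W l.castSucc + U l.castSucc) x
        - W (Fin.last n) *ᵥ actStack n (fun l => d l.castSucc) (fun l => W l.castSucc) x
        = W (Fin.last n) *ᵥ
            (actStack n (fun l => d l.castSucc) (fun l => W l.castSucc + U l.castSucc) x
              - actStack n (fun l => d l.castSucc) (fun l => W l.castSucc) x)
          + U (Fin.last n) *ᵥ
            actStack n (fun l => d l.castSucc) (fun l => W l.castSucc + U l.castSucc) x := by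
      rw [Matrix.add_mulVec, Matrix.mulVec_sub]
      abel
    calc vnorm (relu ((W (Fin.last n) + U (Fin.last n)) *ᵥ
            actStack n (fun l => d l.castSucc) (fun l => W l.castSucc + U l.castSucc) x)
          - relu (W (Fin.last n) *ᵥ
            actStack n (fun l => d l.castSucc) (fun l => W l.castSucc) x))
        ≤ vnorm ((W (Fin.last n) + U (Fin.last n)) *ᵥ
            actStack n (fun l => d l.castSucc) (fun l => W l.castSucc + U l.castSucc) x
          - W (Fin.last n) *ᵥ
            actStack n (fun l => d l.castSucc) (fun l => W l.castSucc) x) :=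
          vnorm_relu_sub_relu _ _
      _ = vnorm (W (Fin.last n) *ᵥ
            (actStack n (fun l => d l.castSucc) (fun l => W l.castSucc + U l.castSucc) x
              - actStack n (fun l => d l.castSucc) (fun l => W l.castSucc) x)
          + U (Fin.last n) *ᵥ
            actStack n (fun l => d l.castSucc) (fun l => W l.castSucc + U l.castSucc) x) := by
          rw [key]
      _ ≤ vnorm (W (Fin.last n) *ᵥ
            (actStack n (fun l => d l.castSucc) (fun l => W l.castSucc + U l.castSucc) x
              - actStack n (fun l => d l.castSucc) (fun l => W l.castSucc) x))
          + vnorm (U (Fin.last n) *ᵥ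
            actStack n (fun l => d l.castSucc) (fun l => W l.castSucc + U l.castSucc) x) :=
          vnorm_add_le _ _
      _ ≤ specNorm (W (Fin.last n)) *
            ((∏ l : Fin n, (specNorm (W l.castSucc) + specNorm (U l.castSucc))) *
              (∑ l : Fin n, specNorm (U l.castSucc) / specNorm (W l.castSucc)) * vnorm x)
          + specNorm (U (Fin.last n)) *
            ((∏ l : Fin n, (specNorm (W l.castSucc) + specNorm (U l.castSucc))) * vnorm x) :=
          add_le_add
            ((vnorm_mulVec_le _ _).trans (mul_le_mul_of_nonneg_left hIH hwpos.le))
            ((vnorm_mulVec_le _ _).trans (mul_le_mul_of_nonneg_left hga hu0))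
      _ ≤ (∏ l : Fin n, (specNorm (W l.castSucc) + specNorm (U l.castSucc))) *
            (specNorm (W (Fin.last n)) + specNorm (U (Fin.last n))) *
            ((∑ l : Fin n, specNorm (U l.castSucc) / specNorm (W l.castSucc))
              + specNorm (U (Fin.last n)) / specNorm (W (Fin.last n))) * vnorm x :=
          step_arith _ _ _ _ _ hwpos hu0 hP0 hS0 hX0
lemma reluNet_vnorm_le (n : ℕ) (d : Fin (n + 1) → ℕ)
    (W : (l : Fin n) → Matrix (Fin (d l.succ)) (Fin (d l.castSucc)) ℝ)
    (x : Fin (d 0) → ℝ) :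
    vnorm (reluNet n d W x) ≤ (∏ l, specNorm (W l)) * vnorm x := by
  cases n with
  | zero => simp [reluNet]
  | succ m =>
    simp only [reluNet]
    rw [Fin.prod_univ_castSucc]
    calc vnorm (W (Fin.last m) *ᵥ actStack m (fun l => d l.castSucc) (fun l => W l.castSucc) x)
        ≤ specNorm (W (Fin.last m)) *
          vnorm (actStack m (fun l => d l.castSucc) (fun l => W l.castSucc) x) :=
          vnorm_mulVec_le _ _
      _ ≤ specNorm (W (Fin.last m)) * ((∏ l : Fin m, specNorm (W l.castSucc)) * vnorm x) :=
          mul_le_mul_of_nonneg_left (actStack_vnorm_le m (fun l => d l.castSucc) (fun l => W l.castSucc) x) (specNorm_nonneg _)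
      _ = _ := by ring

lemma reluNet_perturb (n : ℕ) (d : Fin (n + 1) → ℕ)
    (W U : (l : Fin n) → Matrix (Fin (d l.succ)) (Fin (d l.castSucc)) ℝ)
    (hW : ∀ l, W l ≠ 0) (x : Fin (d 0) → ℝ) :
    vnorm (reluNet n d (fun l => W l + U l) x - reluNet n d W x)
      ≤ (∏ l, (specNorm (W l) + specNorm (U l))) *
          (∑ l, specNorm (U l) / specNorm (W l)) * vnorm x := by
  cases n with
  | zero =>
    simp only [reluNet]
    rw [vnorm_sub_zero]
    simp
  | succ n =>
    have hIH := actStack_perturb n (fun l => d l.castSucc) (fun l => W l.castSucc)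
      (fun l => U l.castSucc) (fun l => hW l.castSucc) x
    have hA := actStack_vnorm_le n (fun l => d l.castSucc)
      (fun l => W l.castSucc + U l.castSucc) x
    have hprodA : (∏ l : Fin n, specNorm (W l.castSucc + U l.castSucc)) ≤
        ∏ l : Fin n, (specNorm (W l.castSucc) + specNorm (U l.castSucc)) :=
      Finset.prod_le_prod (fun l _ => specNorm_nonneg _) (fun l _ => specNorm_add_le _ _)
    have hwpos : 0 < specNorm (W (Fin.last n)) := specNorm_pos (hW _)
    have hu0 : 0 ≤ specNorm (U (Fin.last n)) := specNorm_nonneg _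
    have hP0 : 0 ≤ ∏ l : Fin n, (specNorm (W l.castSucc) + specNorm (U l.castSucc)) :=
      Finset.prod_nonneg fun l _ => add_nonneg (specNorm_nonneg _) (specNorm_nonneg _)
    have hS0 : 0 ≤ ∑ l : Fin n, specNorm (U l.castSucc) / specNorm (W l.castSucc) :=
      Finset.sum_nonneg fun l _ => div_nonneg (specNorm_nonneg _) (specNorm_pos (hW _)).le
    have hX0 : 0 ≤ vnorm x := vnorm_nonneg x
    have hga : vnorm (actStack n (fun l => d l.castSucc)
          (fun l => W l.castSucc + U l.castSucc) x) ≤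
        (∏ l : Fin n, (specNorm (W l.castSucc) + specNorm (U l.castSucc))) * vnorm x :=
      hA.trans (mul_le_mul_of_nonneg_right hprodA hX0)
    simp only [reluNet]
    rw [Fin.prod_univ_castSucc, Fin.sum_univ_castSucc]
    have key : (W (Fin.last n) + U (Fin.last n)) *ᵥ
          actStack n (fun l => d l.castSucc) (fun l => W l.castSucc + U l.castSucc) x
        - W (Fin.last n) *ᵥ actStack n (fun l => d l.castSucc) (fun l => W l.castSucc) x
        = W (Fin.last n) *ᵥ
            (actStack n (fun l => d l.castSucc) (fun l => W l.castSucc + U l.castSucc) x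
              - actStack n (fun l => d l.castSucc) (fun l => W l.castSucc) x)
          + U (Fin.last n) *ᵥ
            actStack n (fun l => d l.castSucc) (fun l => W l.castSucc + U l.castSucc) x := by
      rw [Matrix.add_mulVec, Matrix.mulVec_sub]
      abel
    calc vnorm ((W (Fin.last n) + U (Fin.last n)) *ᵥ
            actStack n (fun l => d l.castSucc) (fun l => W l.castSucc + U l.castSucc) x
          - W (Fin.last n) *ᵥ
            actStack n (fun l => d l.castSucc) (fun l => W l.castSucc) x)
        = vnorm (W (Fin.last n) *ᵥ
            (actStack n (fun l => d l.castSucc) (fun l => W l.castSucc + U l.castSucc) x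
              - actStack n (fun l => d l.castSucc) (fun l => W l.castSucc) x)
          + U (Fin.last n) *ᵥ
            actStack n (fun l => d l.castSucc) (fun l => W l.castSucc + U l.castSucc) x) := by
          rw [key]
      _ ≤ vnorm (W (Fin.last n) *ᵥ
            (actStack n (fun l => d l.castSucc) (fun l => W l.castSucc + U l.castSucc) x
              - actStack n (fun l => d l.castSucc) (fun l => W l.castSucc) x))
          + vnorm (U (Fin.last n) *ᵥ
            actStack n (fun l => d l.castSucc) (fun l => W l.castSucc + U l.castSucc) x) :=
          vnorm_add_le _ _
      _ ≤ specNorm (W (Fin.last n)) *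
            ((∏ l : Fin n, (specNorm (W l.castSucc) + specNorm (U l.castSucc))) *
              (∑ l : Fin n, specNorm (U l.castSucc) / specNorm (W l.castSucc)) * vnorm x)
          + specNorm (U (Fin.last n)) *
            ((∏ l : Fin n, (specNorm (W l.castSucc) + specNorm (U l.castSucc))) * vnorm x) :=
          add_le_add
            ((vnorm_mulVec_le _ _).trans (mul_le_mul_of_nonneg_left hIH hwpos.le))
            ((vnorm_mulVec_le _ _).trans (mul_le_mul_of_nonneg_left hga hu0))
      _ ≤ (∏ l : Fin n, (specNorm (W l.castSucc) + specNorm (U l.castSucc))) *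
            (specNorm (W (Fin.last n)) + specNorm (U (Fin.last n))) *
            ((∑ l : Fin n, specNorm (U l.castSucc) / specNorm (W l.castSucc))
              + specNorm (U (Fin.last n)) / specNorm (W (Fin.last n))) * vnorm x :=
          step_arith _ _ _ _ _ hwpos hu0 hP0 hS0 hX0

lemma abs_sSup_sub_sSup_le {α : Type*} {s : Set α} (hs : s.Nonempty) {g h : α → ℝ} {c : ℝ}
    (hgh : ∀ y ∈ s, |g y - h y| ≤ c)
    (hg : BddAbove (g '' s)) (hh : BddAbove (h '' s)) :
    |sSup (g '' s) - sSup (h '' s)| ≤ c := by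
  rw [abs_sub_le_iff]
  constructor
  · rw [sub_le_iff_le_add]
    apply csSup_le (hs.image g)
    rintro z ⟨y, hy, rfl⟩
    have h1 : h y ≤ sSup (h '' s) := le_csSup hh ⟨y, hy, rfl⟩
    have h2 := (abs_sub_le_iff.mp (hgh y hy)).1
    linarith
  · rw [sub_le_iff_le_add]
    apply csSup_le (hs.image h)
    rintro z ⟨y, hy, rfl⟩
    have h1 : g y ≤ sSup (g '' s) := le_csSup hg ⟨y, hy, rfl⟩
    have h2 := (abs_sub_le_iff.mp (hgh y hy)).2
    linarith

lemma prod_add_le_exp_mul_prod {n : ℕ} (hn : 1 ≤ n) (d : Fin (n + 1) → ℕ)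
    (W U : (l : Fin n) → Matrix (Fin (d l.succ)) (Fin (d l.castSucc)) ℝ)
    (hU : ∀ l, specNorm (U l) ≤ (1 / (n : ℝ)) * specNorm (W l)) :
    (∏ l, (specNorm (W l) + specNorm (U l))) ≤ Real.exp 1 * ∏ l, specNorm (W l) := by
  have hn' : (0 : ℝ) < n := by exact_mod_cast hn
  have step1 : (∏ l, (specNorm (W l) + specNorm (U l))) ≤
      ∏ l, specNorm (W l) * (1 + 1 / (n : ℝ)) := by
    apply Finset.prod_le_prod (fun l _ => add_nonneg (specNorm_nonneg _) (specNorm_nonneg _))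
    intro l _
    calc specNorm (W l) + specNorm (U l)
        ≤ specNorm (W l) + 1 / (n : ℝ) * specNorm (W l) := by linarith [hU l]
      _ = specNorm (W l) * (1 + 1 / (n : ℝ)) := by ring
  have step2 : ((1 : ℝ) + 1 / (n : ℝ)) ^ n ≤ Real.exp 1 := by
    have h1 : (1 : ℝ) + 1 / (n : ℝ) ≤ Real.exp (1 / (n : ℝ)) := by
      have := Real.add_one_le_exp (1 / (n : ℝ)); linarith
    calc ((1 : ℝ) + 1 / (n : ℝ)) ^ n ≤ (Real.exp (1 / (n : ℝ))) ^ n :=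
          pow_le_pow_left₀ (by positivity) h1 n
      _ = Real.exp ((n : ℝ) * (1 / (n : ℝ))) := (Real.exp_nat_mul _ n).symm
      _ = Real.exp 1 := by rw [mul_one_div_cancel hn'.ne']
  have hprodW : 0 ≤ ∏ l, specNorm (W l) :=
    Finset.prod_nonneg fun l _ => specNorm_nonneg _
  calc (∏ l, (specNorm (W l) + specNorm (U l)))
      ≤ ∏ l, specNorm (W l) * (1 + 1 / (n : ℝ)) := step1
    _ = (∏ l, specNorm (W l)) * ((1 : ℝ) + 1 / (n : ℝ)) ^ n := by
        rw [Finset.prod_mul_distrib, Finset.prod_const, Finset.card_univ, Fintype.card_fin]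
    _ ≤ (∏ l, specNorm (W l)) * Real.exp 1 :=
        mul_le_mul_of_nonneg_left step2 hprodW
    _ = Real.exp 1 * ∏ l, specNorm (W l) := by ring

/-- The robust margin operator with radius `ε` of a function
`f : ℝ^din → ℝ^dout` at `x` for an index pair `(i, j)`:
`RM_ε(f, x, i, j) = max_{‖x' - x‖₂ ≤ ε} (f(x')_i - f(x')_j)`,
expressed as the supremum over the closed Euclidean ball. -/
noncomputable def robustMargin {din dout : ℕ} (ε : ℝ)
    (f : (Fin din → ℝ) → (Fin dout → ℝ)) (x : Fin din → ℝ) (i j : Fin dout) : ℝ :=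
  sSup ((fun x' => f x' i - f x' j) '' {x' | vnorm (x' - x) ≤ ε})

/-- robust-margin perturbation bound, Lemma A.2 part 2: if every
`W_l ≠ 0`, `‖U_l‖₂ ≤ (1/n)‖W_l‖₂`, `B > 0`, `ε > 0` and `‖x‖₂ ≤ B`, then for
all output indices `i, j`,
`|RM_ε(f_{W+U}, x, i, j) - RM_ε(f_W, x, i, j)|
  ≤ 2e·(B+ε)·(∏_l ‖W_l‖₂)·∑_l ‖U_l‖₂/‖W_l‖₂`. -/
theorem robustMargin_reluNet_perturb_le {n : ℕ} (hn : 1 ≤ n) (d : Fin (n + 1) → ℕ)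
    (W U : (l : Fin n) → Matrix (Fin (d l.succ)) (Fin (d l.castSucc)) ℝ)
    (hW : ∀ l, W l ≠ 0)
    (hU : ∀ l, specNorm (U l) ≤ (1 / (n : ℝ)) * specNorm (W l))
    (B ε : ℝ) (hB : 0 < B) (hε : 0 < ε)
    (x : Fin (d 0) → ℝ) (hx : vnorm x ≤ B)
    (i j : Fin (d (Fin.last n))) :
    |robustMargin ε (reluNet n d (fun l => W l + U l)) x i j -
        robustMargin ε (reluNet n d W) x i j| ≤
      2 * Real.exp 1 * (B + ε) * (∏ l, specNorm (W l)) *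
        ∑ l, specNorm (U l) / specNorm (W l) := by
  have hBε : (0 : ℝ) < B + ε := by linarith
  have hP'0 : 0 ≤ ∏ l, (specNorm (W l) + specNorm (U l)) :=
    Finset.prod_nonneg fun l _ => add_nonneg (specNorm_nonneg _) (specNorm_nonneg _)
  have hS0 : 0 ≤ ∑ l, specNorm (U l) / specNorm (W l) :=
    Finset.sum_nonneg fun l _ => div_nonneg (specNorm_nonneg _) (specNorm_pos (hW _)).le
  have hsne : Set.Nonempty {x' : Fin (d 0) → ℝ | vnorm (x' - x) ≤ ε} := by
    refine ⟨x, ?_⟩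
    show vnorm (x - x) ≤ ε
    rw [vnorm_sub_zero]; exact hε.le
  have hmem : ∀ y ∈ {x' : Fin (d 0) → ℝ | vnorm (x' - x) ≤ ε}, vnorm y ≤ B + ε := by
    intro y hy
    have hyx : y - x + x = y := by abel
    calc vnorm y = vnorm (y - x + x) := by rw [hyx]
      _ ≤ vnorm (y - x) + vnorm x := vnorm_add_le _ _
      _ ≤ ε + B := add_le_add hy hx
      _ = B + ε := by ring
  set g : (Fin (d 0) → ℝ) → ℝ :=
    fun x' => reluNet n d (fun l => W l + U l) x' i - reluNet n d (fun l => W l + U l) x' j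
    with hg
  set h : (Fin (d 0) → ℝ) → ℝ :=
    fun x' => reluNet n d W x' i - reluNet n d W x' j with hh
  have hpoint : ∀ y ∈ {x' : Fin (d 0) → ℝ | vnorm (x' - x) ≤ ε},
      |g y - h y| ≤ 2 * ((∏ l, (specNorm (W l) + specNorm (U l))) *
        (∑ l, specNorm (U l) / specNorm (W l)) * (B + ε)) := by
    intro y hy
    have hd := reluNet_perturb n d W U hW y
    have hd2 : vnorm (reluNet n d (fun l => W l + U l) y - reluNet n d W y) ≤
        (∏ l, (specNorm (W l) + specNorm (U l))) *
          (∑ l, specNorm (U l) / specNorm (W l)) * (B + ε) :=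
      hd.trans (mul_le_mul_of_nonneg_left (hmem y hy) (mul_nonneg hP'0 hS0))
    have ei := abs_apply_le_vnorm (reluNet n d (fun l => W l + U l) y - reluNet n d W y) i
    have ej := abs_apply_le_vnorm (reluNet n d (fun l => W l + U l) y - reluNet n d W y) j
    have hpi : (reluNet n d (fun l => W l + U l) y - reluNet n d W y) i =
        reluNet n d (fun l => W l + U l) y i - reluNet n d W y i := rfl
    have hpj : (reluNet n d (fun l => W l + U l) y - reluNet n d W y) j =
        reluNet n d (fun l => W l + U l) y j - reluNet n d W y j := rfl
    rw [hpi] at ei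
    rw [hpj] at ej
    have heq : g y - h y =
        (reluNet n d (fun l => W l + U l) y i - reluNet n d W y i) -
          (reluNet n d (fun l => W l + U l) y j - reluNet n d W y j) := by
      simp only [hg, hh]; ring
    rw [heq]
    have habs := abs_sub (reluNet n d (fun l => W l + U l) y i - reluNet n d W y i)
      (reluNet n d (fun l => W l + U l) y j - reluNet n d W y j)
    linarith
  have hbddg : BddAbove (g '' {x' : Fin (d 0) → ℝ | vnorm (x' - x) ≤ ε}) := by
    refine ⟨2 * (∏ l, specNorm (W l + U l)) * (B + ε), ?_⟩
    rintro z ⟨y, hy, rfl⟩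
    have h1 := reluNet_vnorm_le n d (fun l => W l + U l) y
    have hPg0 : 0 ≤ ∏ l, specNorm (W l + U l) :=
      Finset.prod_nonneg fun l _ => specNorm_nonneg _
    have h2 : (∏ l, specNorm (W l + U l)) * vnorm y ≤
        (∏ l, specNorm (W l + U l)) * (B + ε) :=
      mul_le_mul_of_nonneg_left (hmem y hy) hPg0
    have ei := abs_apply_le_vnorm (reluNet n d (fun l => W l + U l) y) i
    have ej := abs_apply_le_vnorm (reluNet n d (fun l => W l + U l) y) j
    have eig := le_abs_self (reluNet n d (fun l => W l + U l) y i)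
    have ejg := neg_abs_le (reluNet n d (fun l => W l + U l) y j)
    show g y ≤ _
    simp only [hg]
    linarith
  have hbddh : BddAbove (h '' {x' : Fin (d 0) → ℝ | vnorm (x' - x) ≤ ε}) := by
    refine ⟨2 * (∏ l, specNorm (W l)) * (B + ε), ?_⟩
    rintro z ⟨y, hy, rfl⟩
    have h1 := reluNet_vnorm_le n d W y
    have hPg0 : 0 ≤ ∏ l, specNorm (W l) :=
      Finset.prod_nonneg fun l _ => specNorm_nonneg _
    have h2 : (∏ l, specNorm (W l)) * vnorm y ≤ (∏ l, specNorm (W l)) * (B + ε) :=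
      mul_le_mul_of_nonneg_left (hmem y hy) hPg0
    have ei := abs_apply_le_vnorm (reluNet n d W y) i
    have ej := abs_apply_le_vnorm (reluNet n d W y) j
    have eig := le_abs_self (reluNet n d W y i)
    have ejg := neg_abs_le (reluNet n d W y j)
    show h y ≤ _
    simp only [hh]
    linarith
  have main := abs_sSup_sub_sSup_le hsne hpoint hbddg hbddh
  have hPle := prod_add_le_exp_mul_prod hn d W U hU
  have hkey : (∏ l, (specNorm (W l) + specNorm (U l))) *
      ((∑ l, specNorm (U l) / specNorm (W l)) * (B + ε)) ≤
      (Real.exp 1 * ∏ l, specNorm (W l)) *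
        ((∑ l, specNorm (U l) / specNorm (W l)) * (B + ε)) :=
    mul_le_mul_of_nonneg_right hPle (mul_nonneg hS0 hBε.le)
  calc |robustMargin ε (reluNet n d (fun l => W l + U l)) x i j -
        robustMargin ε (reluNet n d W) x i j|
      = |sSup (g '' {x' : Fin (d 0) → ℝ | vnorm (x' - x) ≤ ε}) -
          sSup (h '' {x' : Fin (d 0) → ℝ | vnorm (x' - x) ≤ ε})| := rfl
    _ ≤ 2 * ((∏ l, (specNorm (W l) + specNorm (U l))) *
        (∑ l, specNorm (U l) / specNorm (W l)) * (B + ε)) := main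
    _ ≤ 2 * ((Real.exp 1 * ∏ l, specNorm (W l)) *
        ((∑ l, specNorm (U l) / specNorm (W l)) * (B + ε))) := by linarith
    _ = 2 * Real.exp 1 * (B + ε) * (∏ l, specNorm (W l)) *
        ∑ l, specNorm (U l) / specNorm (W l) := by ring
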